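/- For every j ∈ {1, …, n}, the map w ↦ μ(Vor_w(j)) from ℝ^n to ℝ is continuous. -/

import Mathlib

open MeasureTheory ENNReal Filter Topology

noncomputable section

/-- The additively weighted Voronoi cell of the site `y j` with weights `w`. -/
def Vor {d n : ℕ} (y : Fin n → EuclideanSpace ℝ (Fin d)) (w : Fin n → ℝ) (j : Fin n) :
    Set (EuclideanSpace ℝ (Fin d)) :=
  {x | ∀ k, k ≠ j → ‖x - y j‖ - w j ≤ ‖x - y k‖ - w k}

lemma quad_root_finite {a b c : ℝ} (h : ¬(a = 0 ∧ b = 0 ∧ c = 0)) :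
    {t : ℝ | a * t ^ 2 + b * t + c = 0}.Finite := by
  classical
  set p : Polynomial ℝ :=
    Polynomial.C a * Polynomial.X ^ 2 + Polynomial.C b * Polynomial.X + Polynomial.C c with hp
  have hp0 : p ≠ 0 := by
    intro h0
    apply h
    refine ⟨?_, ?_, ?_⟩
    · have := congrArg (fun q => Polynomial.coeff q 2) h0
      simpa [hp, Polynomial.coeff_C] using this
    · have := congrArg (fun q => Polynomial.coeff q 1) h0
      simpa [hp, Polynomial.coeff_C] using this
    · have := congrArg (fun q => Polynomial.coeff q 0) h0
      simpa [hp, Polynomial.coeff_C] using this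
  refine (Polynomial.finite_setOf_isRoot hp0).subset ?_
  intro t ht
  simp only [Set.mem_setOf_eq] at ht ⊢
  simp only [Polynomial.IsRoot, hp, Polynomial.eval_add, Polynomial.eval_mul,
    Polynomial.eval_pow, Polynomial.eval_C, Polynomial.eval_X]
  linarith

lemma slice_finite {L c q : ℝ} (hL : L ≠ 0) (hq : 0 < q) :
    {t : ℝ | Real.sqrt (t ^ 2 + q) - Real.sqrt ((t - L) ^ 2 + q) = c}.Finite := by
  have hne : ¬(4 * (L ^ 2 - c ^ 2) = 0 ∧ -4 * L * (L ^ 2 - c ^ 2) = 0 ∧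
      ((L ^ 2 - c ^ 2) ^ 2 - 4 * c ^ 2 * q) = 0) := by
    rintro ⟨h1, h2, h3⟩
    have hcL : L ^ 2 - c ^ 2 = 0 := by linarith
    have hL2 : 0 < L ^ 2 := by positivity
    nlinarith
  refine (quad_root_finite hne).subset ?_
  intro t ht
  simp only [Set.mem_setOf_eq] at ht ⊢
  set A := Real.sqrt (t ^ 2 + q) with hA
  set B := Real.sqrt ((t - L) ^ 2 + q) with hB
  have hA2 : A ^ 2 = t ^ 2 + q := Real.sq_sqrt (by positivity)
  have hB2 : B ^ 2 = (t - L) ^ 2 + q := Real.sq_sqrt (by positivity)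
  have hAB : A = B + c := by linarith
  have hA2' : (B + c) ^ 2 = t ^ 2 + q := by rw [← hAB]; exact hA2
  have h1 : 2 * c * B = 2 * L * t - L ^ 2 - c ^ 2 := by linear_combination hA2' - hB2
  linear_combination (-(2 * c * B + (2 * L * t - L ^ 2 - c ^ 2))) * h1 + 4 * c ^ 2 * hB2

lemma prod_level_null {m : ℕ} {L c : ℝ} (hL : L ≠ 0) :
    (volume : Measure (ℝ × (Fin (m + 1) → ℝ)))
      {p : ℝ × (Fin (m + 1) → ℝ) |
        Real.sqrt (p.1 ^ 2 + ∑ i, p.2 i ^ 2) -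
          Real.sqrt ((p.1 - L) ^ 2 + ∑ i, p.2 i ^ 2) = c} = 0 := by
  have hcont : Continuous fun p : ℝ × (Fin (m + 1) → ℝ) =>
      Real.sqrt (p.1 ^ 2 + ∑ i, p.2 i ^ 2) -
        Real.sqrt ((p.1 - L) ^ 2 + ∑ i, p.2 i ^ 2) := by
    fun_prop
  have hmeas : MeasurableSet {p : ℝ × (Fin (m + 1) → ℝ) |
      Real.sqrt (p.1 ^ 2 + ∑ i, p.2 i ^ 2) -
        Real.sqrt ((p.1 - L) ^ 2 + ∑ i, p.2 i ^ 2) = c} :=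
    (isClosed_eq hcont continuous_const).measurableSet
  have happ := Measure.prod_apply_symm (μ := (volume : Measure ℝ))
    (ν := (volume : Measure (Fin (m + 1) → ℝ))) hmeas
  rw [← Measure.volume_eq_prod] at happ
  rw [happ]
  have hnull : (volume : Measure (Fin (m + 1) → ℝ)) (Function.eval 0 ⁻¹' ({0} : Set ℝ)) = 0 := by
    rw [volume_pi]
    exact Measure.pi_eval_preimage_null _ (measure_singleton 0)
  have h0 : ∀ᵐ z : Fin (m + 1) → ℝ ∂volume, z ∉ Function.eval 0 ⁻¹' ({0} : Set ℝ) :=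
    measure_eq_zero_iff_ae_notMem.mp hnull
  have hz : ∀ᵐ z : Fin (m + 1) → ℝ ∂volume,
      (volume : Measure ℝ) ((fun t => (t, z)) ⁻¹'
        {p : ℝ × (Fin (m + 1) → ℝ) |
          Real.sqrt (p.1 ^ 2 + ∑ i, p.2 i ^ 2) -
            Real.sqrt ((p.1 - L) ^ 2 + ∑ i, p.2 i ^ 2) = c}) = 0 := by
    filter_upwards [h0] with z hz0
    have hz0' : z 0 ≠ 0 := by simpa using hz0
    have hq : 0 < ∑ i, z i ^ 2 := by
      have h1 : z 0 ^ 2 ≤ ∑ i, z i ^ 2 :=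
        Finset.single_le_sum (f := fun i => z i ^ 2) (fun i _ => sq_nonneg _) (Finset.mem_univ 0)
      have h2 : 0 < z 0 ^ 2 := by positivity
      linarith
    exact (slice_finite hL hq).measure_zero _
  calc (∫⁻ z, (volume : Measure ℝ) ((fun t => (t, z)) ⁻¹'
        {p : ℝ × (Fin (m + 1) → ℝ) |
          Real.sqrt (p.1 ^ 2 + ∑ i, p.2 i ^ 2) -
            Real.sqrt ((p.1 - L) ^ 2 + ∑ i, p.2 i ^ 2) = c}) ∂volume)
      = ∫⁻ _z, (0 : ℝ≥0∞) ∂(volume : Measure (Fin (m + 1) → ℝ)) := lintegral_congr_ae hz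
    _ = 0 := lintegral_zero

lemma volume_level_null {d : ℕ} (hd : 2 ≤ d) (a b : EuclideanSpace ℝ (Fin d))
    (hab : a ≠ b) (c : ℝ) :
    volume {x : EuclideanSpace ℝ (Fin d) | ‖x - a‖ - ‖x - b‖ = c} = 0 := by
  obtain ⟨m, rfl⟩ : ∃ m, d = m + 2 := ⟨d - 2, by omega⟩
  classical
  set v : EuclideanSpace ℝ (Fin (m + 2)) := b - a with hv
  have hv0 : v ≠ 0 := sub_ne_zero.mpr (Ne.symm hab)
  set L : ℝ := ‖v‖ with hLdef
  have hL0 : 0 < L := norm_pos_iff.mpr hv0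
  set u : EuclideanSpace ℝ (Fin (m + 2)) := L⁻¹ • v with hu
  have hunorm : ‖u‖ = 1 := by
    rw [hu, norm_smul, norm_inv, Real.norm_eq_abs, abs_of_pos hL0]
    field_simp
    exact hLdef.symm
  have horth : Orthonormal ℝ (({0} : Set (Fin (m + 2))).restrict fun _ => u) := by
    constructor
    · intro i; exact hunorm
    · intro i j hij; exact absurd (Subsingleton.elim i j) hij
  obtain ⟨B, hB⟩ := Orthonormal.exists_orthonormalBasis_extension_of_card_eq
    (𝕜 := ℝ) (by simp) horth
  have hB0 : B 0 = u := hB 0 rfl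
  set e := B.repr with he
  have hmp : MeasurePreserving
      (fun x : EuclideanSpace ℝ (Fin (m + 2)) =>
        (MeasurableEquiv.piFinSuccAbove (fun _ : Fin (m + 2) => ℝ) 0)
          ((MeasurableEquiv.toLp 2 (Fin (m + 2) → ℝ)).symm (e (x - a))))
      volume volume :=
    ((MeasureTheory.volume_preserving_piFinSuccAbove (fun _ : Fin (m + 2) => ℝ) 0).comp
      ((EuclideanSpace.volume_preserving_symm_measurableEquiv_toLp (Fin (m + 2))).comp
        (e.measurePreserving.comp (measurePreserving_sub_right volume a))))
  have hcont : Continuous fun p : ℝ × (Fin (m + 1) → ℝ) =>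
      Real.sqrt (p.1 ^ 2 + ∑ i, p.2 i ^ 2) -
        Real.sqrt ((p.1 - L) ^ 2 + ∑ i, p.2 i ^ 2) := by
    fun_prop
  have hTmeas : MeasurableSet {p : ℝ × (Fin (m + 1) → ℝ) |
      Real.sqrt (p.1 ^ 2 + ∑ i, p.2 i ^ 2) -
        Real.sqrt ((p.1 - L) ^ 2 + ∑ i, p.2 i ^ 2) = c} :=
    (isClosed_eq hcont continuous_const).measurableSet
  have hnorm1 : ∀ y : EuclideanSpace ℝ (Fin (m + 2)),
      Real.sqrt (y 0 ^ 2 + ∑ i : Fin (m + 1), y (Fin.succAbove 0 i) ^ 2) = ‖y‖ := by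
    intro y
    rw [EuclideanSpace.norm_eq]
    congr 1
    rw [Fin.sum_univ_succAbove (fun i => ‖y i‖ ^ 2) 0]
    simp [Real.norm_eq_abs, sq_abs]
  have hev : e v = EuclideanSpace.single 0 L := by
    have hvL : v = L • u := by
      rw [hu, smul_smul, mul_inv_cancel₀ (ne_of_gt hL0), one_smul]
    rw [hvL, LinearIsometryEquiv.map_smul, ← hB0, he, OrthonormalBasis.repr_self]
    ext i
    simp [EuclideanSpace.single_apply]
  have hset : {x : EuclideanSpace ℝ (Fin (m + 2)) | ‖x - a‖ - ‖x - b‖ = c} =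
      (fun x : EuclideanSpace ℝ (Fin (m + 2)) =>
        (MeasurableEquiv.piFinSuccAbove (fun _ : Fin (m + 2) => ℝ) 0)
          ((MeasurableEquiv.toLp 2 (Fin (m + 2) → ℝ)).symm (e (x - a)))) ⁻¹'
      {p : ℝ × (Fin (m + 1) → ℝ) |
        Real.sqrt (p.1 ^ 2 + ∑ i, p.2 i ^ 2) -
          Real.sqrt ((p.1 - L) ^ 2 + ∑ i, p.2 i ^ 2) = c} := by
    ext x
    simp only [Set.mem_setOf_eq, Set.mem_preimage]
    have hfst : ((MeasurableEquiv.piFinSuccAbove (fun _ : Fin (m + 2) => ℝ) 0)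
        ((MeasurableEquiv.toLp 2 (Fin (m + 2) → ℝ)).symm (e (x - a)))).1 = (e (x - a)) 0 := rfl
    have hsnd : ∀ i : Fin (m + 1),
        ((MeasurableEquiv.piFinSuccAbove (fun _ : Fin (m + 2) => ℝ) 0)
          ((MeasurableEquiv.toLp 2 (Fin (m + 2) → ℝ)).symm (e (x - a)))).2 i =
        (e (x - a)) (Fin.succAbove 0 i) := fun i => rfl
    rw [hfst]
    simp only [hsnd]
    have h1 : Real.sqrt ((e (x - a)) 0 ^ 2 + ∑ i : Fin (m + 1),
        (e (x - a)) (Fin.succAbove 0 i) ^ 2) = ‖x - a‖ := by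
      rw [hnorm1 (e (x - a)), he, LinearIsometryEquiv.norm_map]
    have h2 : Real.sqrt (((e (x - a)) 0 - L) ^ 2 + ∑ i : Fin (m + 1),
        (e (x - a)) (Fin.succAbove 0 i) ^ 2) = ‖x - b‖ := by
      have hxb : e (x - b) = e (x - a) - EuclideanSpace.single 0 L := by
        rw [← hev, ← map_sub]
        congr 1
        rw [hv]
        abel
      have key := hnorm1 (e (x - b))
      rw [LinearIsometryEquiv.norm_map] at key
      rw [← key]
      have h0 : (e (x - b)) 0 = (e (x - a)) 0 - L := by
        rw [hxb]
        simp [EuclideanSpace.single_apply]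
      have hsum : ∀ i : Fin (m + 1),
          (e (x - b)) (Fin.succAbove 0 i) = (e (x - a)) (Fin.succAbove 0 i) := by
        intro i
        have hne : Fin.succAbove (0 : Fin (m + 2)) i ≠ 0 := by
          rw [Fin.succAbove_zero]
          exact Fin.succ_ne_zero i
        rw [hxb]
        simp only [Fin.succAbove_zero, PiLp.sub_apply, EuclideanSpace.single_apply]
        rw [if_neg (Fin.succ_ne_zero i), sub_zero]
      congr 1
      simp only [h0, hsum]
    rw [h1, h2]
  rw [hset, hmp.measure_preimage hTmeas.nullMeasurableSet]
  exact prod_level_null (ne_of_gt hL0)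

/-- For every `j`, the map `w ↦ μ(Vor_w(j))` from `ℝⁿ` to `ℝ`
is continuous. -/
theorem measure_Vor_continuous
    {d n : ℕ} (hd : 2 ≤ d)
    (μ : Measure (EuclideanSpace ℝ (Fin d))) [IsProbabilityMeasure μ]
    (hac : μ ≪ volume)
    (y : Fin n → EuclideanSpace ℝ (Fin d)) (hy : Function.Injective y) :
    ∀ j : Fin n, Continuous (fun w : Fin n → ℝ => (μ (Vor y w j)).toReal) := by
  intro j
  have hVorClosed : ∀ w : Fin n → ℝ, IsClosed (Vor y w j) := by
    intro w
    have hrepr : Vor y w j =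
        ⋂ k, ⋂ (_ : k ≠ j), {x : EuclideanSpace ℝ (Fin d) |
          ‖x - y j‖ - w j ≤ ‖x - y k‖ - w k} := by
      ext x; simp [Vor]
    rw [hrepr]
    exact isClosed_iInter fun k => isClosed_iInter fun _ =>
      isClosed_le (by fun_prop) (by fun_prop)
  rw [continuous_iff_continuousAt]
  intro w₀
  have hN : μ (⋃ k, ⋃ (_ : k ≠ j),
      {x : EuclideanSpace ℝ (Fin d) | ‖x - y j‖ - ‖x - y k‖ = w₀ j - w₀ k}) = 0 := by
    apply hac
    refine measure_iUnion_null fun k => measure_iUnion_null fun hk => ?_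
    exact volume_level_null hd (y j) (y k) (fun h => hk (hy h).symm) _
  have hae : ∀ᵐ x ∂μ, ∀ k, k ≠ j → ‖x - y j‖ - ‖x - y k‖ ≠ w₀ j - w₀ k := by
    filter_upwards [measure_eq_zero_iff_ae_notMem.mp hN] with x hx k hk heq
    exact hx (Set.mem_iUnion.mpr ⟨k, Set.mem_iUnion.mpr ⟨hk, heq⟩⟩)
  have key : Tendsto (fun w => μ (Vor y w j)) (𝓝 w₀) (𝓝 (μ (Vor y w₀ j))) := by
    apply tendsto_measure_of_ae_tendsto_indicator_of_isFiniteMeasure (𝓝 w₀)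
      (hVorClosed w₀).measurableSet (fun w => (hVorClosed w).measurableSet)
    filter_upwards [hae] with x hx
    by_cases hxin : x ∈ Vor y w₀ j
    · have hstrict : ∀ k, k ≠ j → ‖x - y j‖ - ‖x - y k‖ < w₀ j - w₀ k := by
        intro k hk
        have h1 : ‖x - y j‖ - w₀ j ≤ ‖x - y k‖ - w₀ k := hxin k hk
        exact lt_of_le_of_ne (by linarith) (hx k hk)
      have hev : ∀ᶠ w in 𝓝 w₀, ∀ k, k ≠ j → ‖x - y j‖ - ‖x - y k‖ < w j - w k := by
        rw [eventually_all]
        intro k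
        by_cases hk : k = j
        · exact Eventually.of_forall fun w hkj => absurd hk hkj
        · have hcw : Tendsto (fun w : Fin n → ℝ => w j - w k) (𝓝 w₀) (𝓝 (w₀ j - w₀ k)) :=
            ((continuous_apply j).sub (continuous_apply k)).tendsto w₀
          filter_upwards [hcw.eventually_const_lt (hstrict k hk)] with w hw _
          exact hw
      filter_upwards [hev] with w hw
      simp only [hxin, iff_true]
      intro k hk
      have := hw k hk
      linarith
    · have hexists : ∃ k, k ≠ j ∧ w₀ j - w₀ k < ‖x - y j‖ - ‖x - y k‖ := by
        by_contra hcon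
        push_neg at hcon
        exact hxin fun k hk => by have := hcon k hk; linarith
      obtain ⟨k, hk, hgt⟩ := hexists
      have hcw : Tendsto (fun w : Fin n → ℝ => w j - w k) (𝓝 w₀) (𝓝 (w₀ j - w₀ k)) :=
        ((continuous_apply j).sub (continuous_apply k)).tendsto w₀
      filter_upwards [hcw.eventually_lt_const hgt] with w hw
      constructor
      · intro hmem
        exfalso
        have := hmem k hk
        linarith
      · intro hmem
        exact absurd hmem hxin
  exact (ENNReal.tendsto_toReal (measure_ne_top μ _)).comp key
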